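/- Let p ∈ ℂ[x] be a monic polynomial of degree n+1 (n ≥ 1), and for each i = 1,…,n let b_i, a_i ∈ ℂ[x] be the quotient and remainder of the division of x^{i−1}·p by p′: x^{i−1}·p = b_i·p′ + a_i with deg a_i ≤ n − 1 (so deg b_i = i). Define the n×n matrix B by B_{ij} = (1/2)·δ_{ij} − (coefficient of x^{j−1} in b_i′). Then B is lower triangular, i.e. B_{ij} = 0 for all j > i, and its diagonal entries are B_{ii} = 1/2 − i/(n+1) for i = 1,…,n. -/
import Mathlib


open Polynomial Finset

/-- Let `p` be monic of degree `n+1` and, for `i = 1,…,n`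
(indexed here by `i - 1 ∈ Fin n`), let `x^{i-1}·p = bᵢ·p′ + aᵢ` be the division
with remainder, `deg aᵢ ≤ n - 1`.  Then the matrix
`B_{ij} = ½δ_{ij} − (bᵢ′)_{j-1}` is lower triangular (`B_{ij} = 0` for `j > i`)
with diagonal entries `B_{ii} = ½ − i/(n+1)`. -/
theorem stmt3 (n : ℕ) (hn : 1 ≤ n) (p : Polynomial ℂ) (hmonic : p.Monic)
    (hdeg : p.natDegree = n + 1)
    (b a : Fin n → Polynomial ℂ)
    (hdiv : ∀ i : Fin n, X ^ (i : ℕ) * p = b i * derivative p + a i)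
    (hadeg : ∀ i, (a i).degree < n) :
    (∀ i j : Fin n, (i : ℕ) < (j : ℕ) →
      (if i = j then (1 / 2 : ℂ) else 0) - (derivative (b i)).coeff j = 0) ∧
    (∀ i : Fin n,
      (1 / 2 : ℂ) - (derivative (b i)).coeff i = 1 / 2 - ((i : ℕ) + 1) / (n + 1)) := by
  have hp0 : p ≠ 0 := hmonic.ne_zero
  set q : Polynomial ℂ := derivative p with hqdef
  have hn1 : ((n : ℂ) + 1) ≠ 0 := by
    exact_mod_cast (Nat.cast_ne_zero (R := ℂ)).mpr (Nat.succ_ne_zero n)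
  have hqcoeff : q.coeff n = (n : ℂ) + 1 := by
    rw [hqdef, coeff_derivative, ← hdeg, ← Polynomial.leadingCoeff, hmonic.leadingCoeff]
    ring
  have hqdeg : q.natDegree = n := by
    refine le_antisymm ?_ (le_natDegree_of_ne_zero (by rw [hqcoeff]; exact hn1))
    have := natDegree_derivative_le p
    rw [hdeg] at this
    rw [hqdef]
    omega
  have hq0 : q ≠ 0 := fun h => hn1 (by rw [← hqcoeff, h, coeff_zero])
  have hqlc : q.leadingCoeff = (n : ℂ) + 1 := by
    rw [Polynomial.leadingCoeff, hqdeg, hqcoeff]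
  -- key facts about b i
  have key : ∀ i : Fin n, (b i).natDegree = (i : ℕ) + 1 ∧
      (b i).leadingCoeff = 1 / ((n : ℂ) + 1) := by
    intro i
    have hM : (X ^ (i : ℕ) * p).Monic := (monic_X_pow _).mul hmonic
    have hMdeg : (X ^ (i : ℕ) * p).natDegree = (i : ℕ) + (n + 1) := by
      rw [natDegree_mul (pow_ne_zero _ X_ne_zero) hp0, natDegree_X_pow, hdeg]
    have hbq : b i * q = X ^ (i : ℕ) * p - a i := by
      have := hdiv i; linear_combination -this
    have hasmall : (a i).natDegree < (X ^ (i : ℕ) * p).natDegree := by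
      rcases eq_or_ne (a i) 0 with h | h
      · rw [h, natDegree_zero, hMdeg]; omega
      · have := (natDegree_lt_iff_degree_lt h).mpr (hadeg i)
        rw [hMdeg]; omega
    have hsubdeg : (X ^ (i : ℕ) * p - a i).natDegree = (i : ℕ) + (n + 1) := by
      rw [natDegree_sub_eq_left_of_natDegree_lt hasmall, hMdeg]
    have hsublc : (X ^ (i : ℕ) * p - a i).leadingCoeff = 1 := by
      rw [Polynomial.leadingCoeff, hsubdeg, coeff_sub,
        coeff_eq_zero_of_natDegree_lt (by omega : (a i).natDegree < (i : ℕ) + (n + 1)),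
        sub_zero, ← hMdeg, ← Polynomial.leadingCoeff, hM.leadingCoeff]
    have hsub0 : X ^ (i : ℕ) * p - a i ≠ 0 := fun h => by
      rw [h, leadingCoeff_zero] at hsublc; exact one_ne_zero hsublc.symm
    have hb0 : b i ≠ 0 := by
      intro h; rw [h, zero_mul] at hbq; exact hsub0 hbq.symm
    have hbdeg : (b i).natDegree = (i : ℕ) + 1 := by
      have := natDegree_mul hb0 hq0
      rw [hbq, hsubdeg, hqdeg] at this; omega
    have hblc : (b i).leadingCoeff * ((n : ℂ) + 1) = 1 := by
      rw [← hqlc, ← leadingCoeff_mul, hbq, hsublc]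
    refine ⟨hbdeg, ?_⟩
    rw [eq_div_iff hn1]
    exact hblc
  constructor
  · intro i j hij
    rw [if_neg (fun h => by simp [h] at hij), coeff_derivative,
      coeff_eq_zero_of_natDegree_lt (by rw [(key i).1]; omega)]
    ring
  · intro i
    have h1 := (key i).1
    have h2 := (key i).2
    rw [Polynomial.leadingCoeff, h1] at h2
    rw [coeff_derivative, h2]
    field_simp
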